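/- (Parity of extended binomial coefficients) For every f : ℕ → ℕ and all k, n ∈ ℕ: if k is even and n is odd then binom(k,n)_f ≡ 0 (mod 2); if k is even and n is even then binom(k,n)_f ≡ binom(k/2, n/2)_f (mod 2); and if k is odd then binom(k,n)_f ≡ ∑_{s=0}^{⌊n/2⌋} f(2s + p(n)) · binom(⌊k/2⌋, ⌊n/2⌋ − s)_f (mod 2), where p(n) = 0 if n is even and p(n) = 1 if n is odd. -/

import Mathlib

/-- The extended binomial coefficient `binom(k,n)_f`: the sum, over all
`k`-tuples `(π₁,…,π_k)` of nonnegative integers with `π₁ + ⋯ + π_k = n`,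
of the products `f(π₁)⋯f(π_k)`. It counts the `f`-weighted integer
compositions of `n` with exactly `k` parts. -/
def extBinom (f : ℕ → ℕ) (k n : ℕ) : ℕ :=
  ∑ π ∈ Finset.Nat.antidiagonalTuple k n, ∏ i, f (π i)

lemma coeff_sq_char2 (G : PowerSeries (ZMod 2)) (n : ℕ) :
    PowerSeries.coeff (R := ZMod 2) n (G ^ 2) =
      if n % 2 = 0 then PowerSeries.coeff (R := ZMod 2) (n / 2) G else 0 := by
  have hmul : ∀ x : ZMod 2, x * x = x := by decide
  rw [sq, PowerSeries.coeff_mul]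
  rcases Nat.even_or_odd n with he | ho
  · obtain ⟨m, rfl⟩ := he
    have hmm : (m, m) ∈ Finset.HasAntidiagonal.antidiagonal (m + m) := by simp
    rw [← Finset.add_sum_erase _ _ hmm, hmul]
    have hz : ∑ p ∈ (Finset.HasAntidiagonal.antidiagonal (m + m)).erase (m, m),
        PowerSeries.coeff (R := ZMod 2) p.1 G * PowerSeries.coeff (R := ZMod 2) p.2 G = 0 := by
      refine Finset.sum_involution (fun p _ => p.swap) ?_ ?_ ?_ ?_
      · intro p _
        rw [Prod.fst_swap, Prod.snd_swap, mul_comm]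
        exact CharTwo.add_self_eq_zero _
      · intro p hp _
        rw [Finset.mem_erase, Finset.HasAntidiagonal.mem_antidiagonal] at hp
        intro hps
        apply hp.1
        have h1 : p.2 = p.1 := congrArg Prod.fst hps
        have : p.1 = m := by omega
        rw [Prod.ext_iff]
        exact ⟨this, by omega⟩
      · intro p hp
        rw [Finset.mem_erase, Finset.HasAntidiagonal.mem_antidiagonal] at hp
        rw [Finset.mem_erase, Finset.HasAntidiagonal.mem_antidiagonal]
        constructor
        · intro hps
          apply hp.1
          have h1 : p.2 = m := congrArg Prod.fst hps
          rw [Prod.ext_iff]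
          constructor <;> simp_all
        · simp [add_comm, hp.2]
      · intro p _
        exact Prod.swap_swap p
    rw [hz, add_zero]
    have h2 : (m + m) % 2 = 0 := by omega
    have h3 : (m + m) / 2 = m := by omega
    rw [h2, h3, if_pos rfl]
  · obtain ⟨m, rfl⟩ := ho
    have : (2 * m + 1) % 2 = 1 := by omega
    rw [this]
    simp only [one_ne_zero, if_false]
    refine Finset.sum_involution (fun p _ => p.swap) ?_ ?_ ?_ ?_
    · intro p _
      rw [Prod.fst_swap, Prod.snd_swap, mul_comm]
      exact CharTwo.add_self_eq_zero _
    · intro p hp _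
      rw [Finset.HasAntidiagonal.mem_antidiagonal] at hp
      intro hps
      have h1 : p.2 = p.1 := congrArg Prod.fst hps
      omega
    · intro p hp
      rw [Finset.HasAntidiagonal.mem_antidiagonal] at hp
      rw [Finset.HasAntidiagonal.mem_antidiagonal, Prod.fst_swap, Prod.snd_swap, add_comm]
      exact hp
    · intro p _
      exact Prod.swap_swap p

lemma extBinom_succ (f : ℕ → ℕ) (k n : ℕ) :
    extBinom f (k+1) n = ∑ ij ∈ Finset.HasAntidiagonal.antidiagonal n,
      f ij.1 * extBinom f k ij.2 := by
  unfold extBinom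
  simp_rw [Finset.mul_sum]
  rw [Finset.sum_sigma']
  refine Finset.sum_bij' (fun (π : Fin (k+1) → ℕ) _ =>
      (⟨(π 0, ∑ i : Fin k, π i.succ), Fin.tail π⟩ : (_ : ℕ × ℕ) × (Fin k → ℕ)))
    (fun p _ => Fin.cons p.1.1 p.2) ?_ ?_ ?_ ?_ ?_
  · intro π hπ
    rw [Finset.Nat.mem_antidiagonalTuple] at hπ
    simp only [Finset.mem_sigma, Finset.HasAntidiagonal.mem_antidiagonal,
      Finset.Nat.mem_antidiagonalTuple]
    exact ⟨by rw [← hπ, Fin.sum_univ_succ], rfl⟩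
  · intro p hp
    rw [Finset.mem_sigma, Finset.HasAntidiagonal.mem_antidiagonal,
      Finset.Nat.mem_antidiagonalTuple] at hp
    rw [Finset.Nat.mem_antidiagonalTuple, Fin.sum_cons, hp.2, hp.1]
  · intro π hπ
    simp [Fin.cons_self_tail]
  · intro p hp
    rw [Finset.mem_sigma, Finset.HasAntidiagonal.mem_antidiagonal,
      Finset.Nat.mem_antidiagonalTuple] at hp
    simp only [Fin.cons_zero, Fin.tail_cons, Fin.cons_succ]
    congr 1
    rw [Prod.ext_iff]
    exact ⟨rfl, by simp [hp.2]⟩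
  · intro π hπ
    rw [Fin.prod_univ_succ]
    rfl

lemma cast_extBinom (f : ℕ → ℕ) (k n : ℕ) :
    ((extBinom f k n : ℕ) : ZMod 2) =
      PowerSeries.coeff (R := ZMod 2) n
        ((PowerSeries.mk fun i => ((f i : ℕ) : ZMod 2)) ^ k) := by
  induction k generalizing n with
  | zero =>
    rw [pow_zero, PowerSeries.coeff_one]
    cases n with
    | zero => simp [extBinom]
    | succ m => simp [extBinom, Finset.Nat.antidiagonalTuple_zero_succ]
  | succ k ih =>
    rw [extBinom_succ, pow_succ', PowerSeries.coeff_mul]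
    push_cast
    refine Finset.sum_congr rfl fun p _ => ?_
    rw [PowerSeries.coeff_mk, ih]

theorem extBinom_parity (f : ℕ → ℕ) (k n : ℕ) :
    (Even k → Odd n → extBinom f k n ≡ 0 [MOD 2]) ∧
    (Even k → Even n → extBinom f k n ≡ extBinom f (k / 2) (n / 2) [MOD 2]) ∧
    (Odd k → extBinom f k n ≡
      ∑ s ∈ Finset.range (n / 2 + 1),
        f (2 * s + n % 2) * extBinom f (k / 2) (n / 2 - s) [MOD 2]) := by
  set F : PowerSeries (ZMod 2) := PowerSeries.mk fun i => ((f i : ℕ) : ZMod 2) with hF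
  refine ⟨?_, ?_, ?_⟩
  · intro hk hn
    have hk' := Nat.even_iff.mp hk
    have hn' := Nat.odd_iff.mp hn
    rw [← ZMod.natCast_eq_natCast_iff]
    rw [cast_extBinom, Nat.cast_zero]
    have hk2 : F ^ k = (F ^ (k / 2)) ^ 2 := by
      rw [← pow_mul]; congr 1; omega
    rw [hk2, coeff_sq_char2, if_neg (by omega)]
  · intro hk hn
    have hk' := Nat.even_iff.mp hk
    have hn' := Nat.even_iff.mp hn
    rw [← ZMod.natCast_eq_natCast_iff]
    rw [cast_extBinom, cast_extBinom]
    have hk2 : F ^ k = (F ^ (k / 2)) ^ 2 := by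
      rw [← pow_mul]; congr 1; omega
    rw [hk2, coeff_sq_char2, if_pos (by omega)]
  · intro hk
    rw [← ZMod.natCast_eq_natCast_iff]
    rw [cast_extBinom]
    have hk' := Nat.odd_iff.mp hk
    have hk2 : k = k / 2 * 2 + 1 := by omega
    rw [hk2, pow_succ, PowerSeries.coeff_mul]
    push_cast
    set m := k / 2
    set Bc : ℕ → ZMod 2 := fun j => PowerSeries.coeff (R := ZMod 2) j (F ^ m) with hBc
    have step1 : ∑ ij ∈ Finset.HasAntidiagonal.antidiagonal n,
        PowerSeries.coeff (R := ZMod 2) ij.1 (F ^ (m * 2)) * PowerSeries.coeff (R := ZMod 2) ij.2 F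
        = ∑ j ∈ Finset.range (n + 1),
            ((f (n - j) : ℕ) : ZMod 2) * (if j % 2 = 0 then Bc (j / 2) else 0) := by
      rw [Finset.Nat.sum_antidiagonal_eq_sum_range_succ_mk]
      refine Finset.sum_congr rfl fun j _ => ?_
      rw [pow_mul, coeff_sq_char2, hF, PowerSeries.coeff_mk, mul_comm]
    rw [step1]
    have step2 : ∑ j ∈ Finset.range (n + 1),
        ((f (n - j) : ℕ) : ZMod 2) * (if j % 2 = 0 then Bc (j / 2) else 0)
        = ∑ t ∈ Finset.range (n / 2 + 1), ((f (n - 2 * t) : ℕ) : ZMod 2) * Bc t := by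
      rw [show (Finset.range (n / 2 + 1) : Finset ℕ) = Finset.range (n / 2 + 1) from rfl]
      have himg : ∑ t ∈ Finset.range (n / 2 + 1),
          ((f (n - 2 * t) : ℕ) : ZMod 2) * Bc t
          = ∑ j ∈ (Finset.range (n / 2 + 1)).image (2 * ·),
              ((f (n - j) : ℕ) : ZMod 2) * (if j % 2 = 0 then Bc (j / 2) else 0) := by
        rw [Finset.sum_image (by intro x _ y _ h; simp only at h; omega)]
        refine Finset.sum_congr rfl fun t _ => ?_
        rw [if_pos (by omega)]
        congr 1
        · congr 1
          omega
      rw [himg]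
      refine (Finset.sum_subset ?_ ?_).symm
      · intro j hj
        simp only [Finset.mem_image, Finset.mem_range] at hj ⊢
        obtain ⟨t, ht, rfl⟩ := hj
        omega
      · intro j hj hj2
        simp only [Finset.mem_image, Finset.mem_range] at hj hj2
        have : j % 2 = 1 := by
          by_contra h
          exact hj2 ⟨j / 2, by omega, by omega⟩
        rw [if_neg (by omega), mul_zero]
    rw [step2]
    rw [← Finset.sum_range_reflect (fun t => ((f (n - 2 * t) : ℕ) : ZMod 2) * Bc t) (n / 2 + 1)]
    refine Finset.sum_congr rfl fun s hs => ?_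
    rw [Finset.mem_range] at hs
    rw [cast_extBinom]
    simp only [Nat.add_sub_cancel]
    have hidx : n - 2 * (n / 2 - s) = 2 * s + n % 2 := by omega
    have hm : (m * 2 + 1) / 2 = m := by omega
    rw [hidx, hm]
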